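/- Let A be an n×n real matrix such that A + Aᵀ is negative definite, let λ > 0 be the smallest eigenvalue of −(A + Aᵀ), and let p_1,…,p_{n−1} ≥ 0. Then every feasible matrix M of the associated semidefinite program satisfying ⟨A_n, M⟩ ≥ 0 obeys tr(M) ≤ (p_1 + ⋯ + p_{n−1})/λ. Consequently, for any E ≥ 0 the set of feasible M with ⟨A_n, M⟩ = E is bounded. -/

import Mathlib

open Matrix

/-- Trace inner product on square matrices: ⟨X, Y⟩ = tr(XY). -/
noncomputable def ip {m : ℕ} (X Y : Matrix (Fin m) (Fin m) ℝ) : ℝ := (X * Y).trace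

/-- For an m×m matrix `A`, the symmetric matrix `A_i = e_i a_iᵀ + a_i e_iᵀ`,
whose i-th row and column equal the i-th row of `A` (with (i,i) entry `2 A i i`),
all other entries zero. -/
noncomputable def sdpMat {m : ℕ} (A : Matrix (Fin m) (Fin m) ℝ) (i : Fin m) :
    Matrix (Fin m) (Fin m) ℝ :=
  Matrix.of fun k l => (if k = i then A i l else 0) + (if l = i then A i k else 0)

/-- Feasibility for the semidefinite program associated to an (n+1)×(n+1) matrix `A`
and data `p`: `M ⪰ 0` and `⟨A_i, M⟩ = -p_i` for every non-final index `i`. -/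
def Feasible {n : ℕ} (A : Matrix (Fin (n + 1)) (Fin (n + 1)) ℝ)
    (p : Fin (n + 1) → ℝ) (M : Matrix (Fin (n + 1)) (Fin (n + 1)) ℝ) : Prop :=
  M.PosSemidef ∧ ∀ i : Fin (n + 1), i ≠ Fin.last n → ip (sdpMat A i) M = -(p i)

section
open scoped MatrixOrder

theorem Matrix.posSemidef_iff_eq_transpose_mul_self {m : ℕ} {A : Matrix (Fin m) (Fin m) ℝ} :
    A.PosSemidef ↔ ∃ B : Matrix (Fin m) (Fin m) ℝ, A = Bᴴ * B := by
  constructor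
  · intro hA
    obtain ⟨X, hX, -, hXA⟩ := CFC.exists_sqrt_of_isSelfAdjoint_of_quasispectrumRestricts
      hA.isHermitian (QuasispectrumRestricts.nnreal_of_nonneg hA.nonneg)
    refine ⟨X, ?_⟩
    rw [← Matrix.star_eq_conjTranspose, hX.star_eq, hXA]
  · rintro ⟨B, rfl⟩
    exact posSemidef_conjTranspose_mul_self B

end

/-- Product of two PSD real matrices has nonnegative trace. -/
lemma trace_mul_nonneg_aux {m : ℕ} {X Y : Matrix (Fin m) (Fin m) ℝ}
    (hX : X.PosSemidef) (hY : Y.PosSemidef) : 0 ≤ (X * Y).trace := by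
  obtain ⟨B, rfl⟩ := Matrix.posSemidef_iff_eq_transpose_mul_self.mp hX
  obtain ⟨C, rfl⟩ := Matrix.posSemidef_iff_eq_transpose_mul_self.mp hY
  have h : (Bᴴ * B * (Cᴴ * C)).trace = ((B * Cᴴ) * (B * Cᴴ)ᴴ).trace := by
    rw [show Bᴴ * B * (Cᴴ * C) = Bᴴ * (B * (Cᴴ * C)) from mul_assoc _ _ _, Matrix.trace_mul_comm,
      Matrix.conjTranspose_mul, Matrix.conjTranspose_conjTranspose]
    simp only [Matrix.mul_assoc]
  rw [h]
  refine Finset.sum_nonneg fun i _ => ?_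
  simp only [Matrix.diag_apply, Matrix.mul_apply, Matrix.conjTranspose_apply, star_trivial]
  exact Finset.sum_nonneg fun j _ => mul_self_nonneg _

/-- Sum of the sdp matrices is A + Aᵀ. -/
lemma sum_sdpMat {m : ℕ} (A : Matrix (Fin m) (Fin m) ℝ) :
    ∑ i, sdpMat A i = A + Aᵀ := by
  ext k l
  simp [sdpMat, Matrix.sum_apply, Finset.sum_add_distrib]

theorem sdp_feasible_set_bounded (n : ℕ)
    (A : Matrix (Fin (n + 1)) (Fin (n + 1)) ℝ)
    (hA : (-(A + Aᵀ)).PosDef)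
    (hHerm : (-(A + Aᵀ)).IsHermitian)
    (lam : ℝ) (hlam_pos : 0 < lam)
    (hlam : IsLeast (Set.range hHerm.eigenvalues) lam)
    (p : Fin (n + 1) → ℝ) (hp : ∀ i : Fin (n + 1), i ≠ Fin.last n → 0 ≤ p i) :
    (∀ M, Feasible A p M → 0 ≤ ip (sdpMat A (Fin.last n)) M →
      M.trace ≤ (∑ i ∈ Finset.univ.erase (Fin.last n), p i) / lam) ∧
    ∀ E : ℝ, 0 ≤ E → ∃ C : ℝ,
      ∀ M, Feasible A p M → ip (sdpMat A (Fin.last n)) M = E → ip M M ≤ C := by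
  classical
  set B : Matrix (Fin (n + 1)) (Fin (n + 1)) ℝ := -(A + Aᵀ) with hB
  set S : ℝ := ∑ i ∈ Finset.univ.erase (Fin.last n), p i with hS
  -- B - lam • 1 is PSD
  have hUs : (hHerm.eigenvectorUnitary : Matrix (Fin (n + 1)) (Fin (n + 1)) ℝ) *
      star (hHerm.eigenvectorUnitary : Matrix (Fin (n + 1)) (Fin (n + 1)) ℝ) = 1 :=
    (Matrix.mem_unitaryGroup_iff).mp hHerm.eigenvectorUnitary.2
  have hdiag : Matrix.diagonal (fun i => hHerm.eigenvalues i - lam) =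
      Matrix.diagonal (RCLike.ofReal ∘ hHerm.eigenvalues) - lam • 1 := by
    rw [Matrix.smul_one_eq_diagonal, Matrix.diagonal_sub]
    rfl
  have key : B - lam • 1 = (hHerm.eigenvectorUnitary : Matrix (Fin (n + 1)) (Fin (n + 1)) ℝ) *
      Matrix.diagonal (fun i => hHerm.eigenvalues i - lam) *
      star (hHerm.eigenvectorUnitary : Matrix (Fin (n + 1)) (Fin (n + 1)) ℝ) := by
    rw [hdiag, Matrix.mul_sub, Matrix.sub_mul, mul_smul_comm, mul_one, Matrix.smul_mul, hUs,
      ← Unitary.conjStarAlgAut_apply (S := ℝ), ← hHerm.spectral_theorem]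
  have hBlam : (B - lam • 1).PosSemidef := by
    rw [key]
    exact (Matrix.posSemidef_diagonal_iff.mpr fun i => sub_nonneg.mpr
      (hlam.2 ⟨i, rfl⟩)).mul_mul_conjTranspose_same _
  -- main trace bound
  have main : ∀ M, Feasible A p M → 0 ≤ ip (sdpMat A (Fin.last n)) M →
      M.trace ≤ S / lam := by
    intro M hM hobj
    have hsum : ip (A + Aᵀ) M = ip (sdpMat A (Fin.last n)) M + ∑ i ∈ Finset.univ.erase (Fin.last n),
        ip (sdpMat A i) M := by
      rw [← sum_sdpMat A]
      unfold ip
      rw [Finset.sum_mul, Matrix.trace_sum,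
        ← Finset.add_sum_erase _ _ (Finset.mem_univ (Fin.last n))]
    have hps : ∑ i ∈ Finset.univ.erase (Fin.last n), ip (sdpMat A i) M = -S := by
      rw [hS, ← Finset.sum_neg_distrib]
      exact Finset.sum_congr rfl fun i hi => hM.2 i (Finset.ne_of_mem_erase hi)
    have htr : 0 ≤ ((B - lam • 1) * M).trace := trace_mul_nonneg_aux hBlam hM.1
    have hexp : ((B - lam • 1) * M).trace
        = -(ip (A + Aᵀ) M) - lam * M.trace := by
      rw [Matrix.sub_mul, Matrix.trace_sub, hB, Matrix.neg_mul, Matrix.trace_neg,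
        Matrix.smul_mul, Matrix.trace_smul, smul_eq_mul, Matrix.one_mul]
      rfl
    have h1 : lam * M.trace ≤ S := by
      rw [hexp, hsum, hps] at htr
      nlinarith
    rw [le_div_iff₀ hlam_pos]
    linarith [mul_comm lam M.trace]
  refine ⟨main, fun E hE => ⟨(S / lam) ^ 2, fun M hM hobj => ?_⟩⟩
  have htrle : M.trace ≤ S / lam := main M hM (hobj ▸ hE)
  have htrnn : 0 ≤ M.trace := by
    rw [Matrix.trace]
    refine Finset.sum_nonneg fun i _ => ?_
    have := hM.1.dotProduct_mulVec_nonneg (Pi.single i 1)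
    simpa [Matrix.mulVec, dotProduct, Pi.single_apply, Finset.sum_ite_eq,
      Finset.sum_ite_eq'] using this
  -- ip M M = ∑ (M i j)^2 ≤ (tr M)^2
  have hsym : ∀ i j, M j i = M i j := by
    intro i j
    have := congrFun (congrFun hM.1.1 i) j
    simpa [Matrix.conjTranspose_apply] using this
  obtain ⟨N, hN⟩ := Matrix.posSemidef_iff_eq_transpose_mul_self.mp hM.1
  have hentry : ∀ i j, (M i j) ^ 2 ≤ M i i * M j j := by
    intro i j
    have h1 : M i j = ∑ k, N k i * N k j := by
      rw [hN]; simp [Matrix.mul_apply, Matrix.conjTranspose_apply]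
    have h2 : M i i = ∑ k, N k i ^ 2 := by
      rw [hN]; simp [Matrix.mul_apply, Matrix.conjTranspose_apply, sq]
    have h3 : M j j = ∑ k, N k j ^ 2 := by
      rw [hN]; simp [Matrix.mul_apply, Matrix.conjTranspose_apply, sq]
    rw [h1, h2, h3]
    exact Finset.sum_mul_sq_le_sq_mul_sq _ _ _
  have hipMM : ip M M = ∑ i, ∑ j, (M i j) ^ 2 := by
    unfold ip
    simp only [Matrix.trace, Matrix.diag_apply, Matrix.mul_apply]
    exact Finset.sum_congr rfl fun i _ => Finset.sum_congr rfl fun j _ => by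
      rw [hsym i j, sq]
  have hle : ip M M ≤ M.trace ^ 2 := by
    rw [hipMM, sq, Matrix.trace, Finset.sum_mul_sum]
    exact Finset.sum_le_sum fun i _ => Finset.sum_le_sum fun j _ => hentry i j
  calc ip M M ≤ M.trace ^ 2 := hle
    _ ≤ (S / lam) ^ 2 := by
        apply pow_le_pow_left₀ htrnn htrle
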